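/- Let (A⊗V,μ_{A⊗V}) and (A⊗W,μ_{A⊗W}) be weak crossed products with preunits ν_V and ν_W, and let T:A⊗V→A⊗W, S:A⊗W→A⊗V be morphisms satisfying T∘μ_{A⊗V}=μ_{A⊗W}∘(T⊗T), S∘T=∇_{A⊗V}, and T∘S=∇_{A⊗W}. Then S is multiplicative, i.e. S∘μ_{A⊗W}=μ_{A⊗V}∘(S⊗S). If moreover T∘ν_V=ν_W, then S∘ν_W=ν_V. -/

import Mathlib

open CategoryTheory MonoidalCategory

universe v u

namespace WeakCrossed

variable {C : Type u} [Category.{v} C] [MonoidalCategory C]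

/-- The monoid axioms for a triple `(A, η, μ)` in a monoidal category. -/
def IsMon (A : C) (eta : 𝟙_ C ⟶ A) (mu : A ⊗ A ⟶ A) : Prop :=
  (eta ▷ A) ≫ mu = (λ_ A).hom ∧ (A ◁ eta) ≫ mu = (ρ_ A).hom ∧
    (mu ▷ A) ≫ mu = (α_ A A A).hom ≫ (A ◁ mu) ≫ mu

/-- The morphism `(μ_A ⊗ Y) ∘ (A ⊗ f) : (A ⊗ X) ⊗ Z ⟶ A ⊗ Y` for `f : X ⊗ Z ⟶ A ⊗ Y`. -/
def phi (A : C) {X Z Y : C} (mu : A ⊗ A ⟶ A) (f : X ⊗ Z ⟶ A ⊗ Y) :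
    (A ⊗ X) ⊗ Z ⟶ A ⊗ Y :=
  (α_ A X Z).hom ≫ (A ◁ f) ≫ (α_ A A Y).inv ≫ (mu ▷ Y)

/-- The measuring condition `(μ_A ⊗ V) ∘ (A ⊗ ψ) ∘ (ψ ⊗ A) = ψ ∘ (V ⊗ μ_A)`. -/
def Measuring (A V : C) (mu : A ⊗ A ⟶ A) (psi : V ⊗ A ⟶ A ⊗ V) : Prop :=
  (psi ▷ A) ≫ phi A mu psi = (α_ V A A).hom ≫ (V ◁ mu) ≫ psi

/-- The idempotent `∇_{A⊗V} = (μ_A ⊗ V) ∘ (A ⊗ ψ) ∘ (A ⊗ V ⊗ η_A)`. -/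
def nabla (A V : C) (eta : 𝟙_ C ⟶ A) (mu : A ⊗ A ⟶ A) (psi : V ⊗ A ⟶ A ⊗ V) :
    A ⊗ V ⟶ A ⊗ V :=
  (ρ_ (A ⊗ V)).inv ≫ ((A ⊗ V) ◁ eta) ≫ phi A mu psi

/-- The twisted condition
`(μ_A ⊗ V) ∘ (A ⊗ ψ) ∘ (σ ⊗ A) = (μ_A ⊗ V) ∘ (A ⊗ σ) ∘ (ψ ⊗ V) ∘ (V ⊗ ψ)`. -/
def Twisted (A V : C) (mu : A ⊗ A ⟶ A) (psi : V ⊗ A ⟶ A ⊗ V)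
    (sig : V ⊗ V ⟶ A ⊗ V) : Prop :=
  (sig ▷ A) ≫ phi A mu psi =
    (α_ V V A).hom ≫ (V ◁ psi) ≫ (α_ V A V).inv ≫ (psi ▷ V) ≫ phi A mu sig

/-- The cocycle condition
`(μ_A ⊗ V) ∘ (A ⊗ σ) ∘ (σ ⊗ V) = (μ_A ⊗ V) ∘ (A ⊗ σ) ∘ (ψ ⊗ V) ∘ (V ⊗ σ)`. -/
def Cocycle (A V : C) (mu : A ⊗ A ⟶ A) (psi : V ⊗ A ⟶ A ⊗ V)
    (sig : V ⊗ V ⟶ A ⊗ V) : Prop :=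
  (sig ▷ V) ≫ phi A mu sig =
    (α_ V V V).hom ≫ (V ◁ sig) ≫ (α_ V A V).inv ≫ (psi ▷ V) ≫ phi A mu sig

/-- The weak crossed product multiplication
`μ_{A⊗V} = (μ_A ⊗ V) ∘ (μ_A ⊗ σ) ∘ (A ⊗ ψ ⊗ V)`. -/
def prodAV (A V : C) (mu : A ⊗ A ⟶ A) (psi : V ⊗ A ⟶ A ⊗ V)
    (sig : V ⊗ V ⟶ A ⊗ V) : (A ⊗ V) ⊗ (A ⊗ V) ⟶ A ⊗ V :=
  (α_ A V (A ⊗ V)).hom ≫ (A ◁ ((α_ V A V).inv ≫ (psi ▷ V) ≫ (α_ A V V).hom)) ≫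
    (α_ A A (V ⊗ V)).inv ≫ (mu ⊗ₘ sig) ≫ (α_ A A V).inv ≫ (mu ▷ V)

/-- The morphism `η_A ⊗ V : V ⟶ A ⊗ V`. -/
def etaT (A V : C) (eta : 𝟙_ C ⟶ A) : V ⟶ A ⊗ V := (λ_ V).inv ≫ (eta ▷ V)

/-- The morphism `β_ν = (μ_A ⊗ V) ∘ (A ⊗ ν) : A ⟶ A ⊗ V`. -/
def beta (A V : C) (mu : A ⊗ A ⟶ A) (nu : 𝟙_ C ⟶ A ⊗ V) : A ⟶ A ⊗ V :=
  (ρ_ A).inv ≫ (A ◁ nu) ≫ (α_ A A V).inv ≫ (mu ▷ V)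

/-- Preunit condition (pre1):
`(μ_A ⊗ V) ∘ (A ⊗ σ) ∘ (ψ ⊗ V) ∘ (V ⊗ ν) = ∇_{A⊗V} ∘ (η_A ⊗ V)`. -/
def Pre1 (A V : C) (eta : 𝟙_ C ⟶ A) (mu : A ⊗ A ⟶ A) (psi : V ⊗ A ⟶ A ⊗ V)
    (sig : V ⊗ V ⟶ A ⊗ V) (nu : 𝟙_ C ⟶ A ⊗ V) : Prop :=
  (ρ_ V).inv ≫ (V ◁ nu) ≫ (α_ V A V).inv ≫ (psi ▷ V) ≫ phi A mu sig =
    etaT A V eta ≫ nabla A V eta mu psi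

/-- Preunit condition (pre2):
`(μ_A ⊗ V) ∘ (A ⊗ σ) ∘ (ν ⊗ V) = ∇_{A⊗V} ∘ (η_A ⊗ V)`. -/
def Pre2 (A V : C) (eta : 𝟙_ C ⟶ A) (mu : A ⊗ A ⟶ A) (psi : V ⊗ A ⟶ A ⊗ V)
    (sig : V ⊗ V ⟶ A ⊗ V) (nu : 𝟙_ C ⟶ A ⊗ V) : Prop :=
  (λ_ V).inv ≫ (nu ▷ V) ≫ phi A mu sig = etaT A V eta ≫ nabla A V eta mu psi

/-- Preunit condition (pre3): `(μ_A ⊗ V) ∘ (A ⊗ ψ) ∘ (ν ⊗ A) = β_ν`. -/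
def Pre3 (A V : C) (mu : A ⊗ A ⟶ A) (psi : V ⊗ A ⟶ A ⊗ V)
    (nu : 𝟙_ C ⟶ A ⊗ V) : Prop :=
  (λ_ A).inv ≫ (nu ▷ A) ≫ phi A mu psi = beta A V mu nu

/-- `(A ⊗ V, μ_{A⊗V})` is a weak crossed product: measuring, twisted and cocycle
conditions hold and `∇_{A⊗V} ∘ σ = σ`. -/
def WCP (A V : C) (eta : 𝟙_ C ⟶ A) (mu : A ⊗ A ⟶ A) (psi : V ⊗ A ⟶ A ⊗ V)
    (sig : V ⊗ V ⟶ A ⊗ V) : Prop :=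
  Measuring A V mu psi ∧ Twisted A V mu psi sig ∧ Cocycle A V mu psi sig ∧
    sig ≫ nabla A V eta mu psi = sig

/-- `(A ⊗ V, μ_{A⊗V})` is a weak crossed product with preunit `ν`. -/
def WCPpre (A V : C) (eta : 𝟙_ C ⟶ A) (mu : A ⊗ A ⟶ A) (psi : V ⊗ A ⟶ A ⊗ V)
    (sig : V ⊗ V ⟶ A ⊗ V) (nu : 𝟙_ C ⟶ A ⊗ V) : Prop :=
  WCP A V eta mu psi sig ∧ Pre1 A V eta mu psi sig nu ∧
    Pre2 A V eta mu psi sig nu ∧ Pre3 A V mu psi nu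

/-- `(μ_A ⊗ Y) ∘ (A ⊗ γ) : A ⊗ X ⟶ A ⊗ Y` for `γ : X ⟶ A ⊗ Y`. -/
def tmap (A : C) {X Y : C} (mu : A ⊗ A ⟶ A) (g : X ⟶ A ⊗ Y) : A ⊗ X ⟶ A ⊗ Y :=
  (A ◁ g) ≫ (α_ A A Y).inv ≫ (mu ▷ Y)

/-- Left `A`-linearity of `T : A ⊗ X ⟶ A ⊗ Y`:
`T ∘ (μ_A ⊗ X) = (μ_A ⊗ Y) ∘ (A ⊗ T)`. -/
def LeftLin (A : C) {X Y : C} (mu : A ⊗ A ⟶ A) (T : A ⊗ X ⟶ A ⊗ Y) : Prop :=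
  (mu ▷ X) ≫ T = (α_ A A X).hom ≫ (A ◁ T) ≫ (α_ A A Y).inv ≫ (mu ▷ Y)

/-- `ν` is a preunit for the associative product `m` on `X`. -/
def IsPreunit {X : C} (m : X ⊗ X ⟶ X) (nu : 𝟙_ C ⟶ X) : Prop :=
  (ρ_ X).inv ≫ (X ◁ nu) ≫ m = (λ_ X).inv ≫ (nu ▷ X) ≫ m ∧
  (ρ_ X).inv ≫ (X ◁ nu) ≫ m =
    (ρ_ X).inv ≫ (X ◁ ((λ_ (𝟙_ C)).inv ≫ (nu ⊗ₘ nu) ≫ m)) ≫ m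

/-- Brzeziński normalization conditions: `ψ ∘ (η_V ⊗ A) = A ⊗ η_V`,
`ψ ∘ (V ⊗ η_A) = η_A ⊗ V`, `σ ∘ (η_V ⊗ V) = σ ∘ (V ⊗ η_V) = η_A ⊗ V`. -/
def BrzNorm (A V : C) (eta : 𝟙_ C ⟶ A) (etaV : 𝟙_ C ⟶ V) (psi : V ⊗ A ⟶ A ⊗ V)
    (sig : V ⊗ V ⟶ A ⊗ V) : Prop :=
  (λ_ A).inv ≫ (etaV ▷ A) ≫ psi = (ρ_ A).inv ≫ (A ◁ etaV) ∧
  (ρ_ V).inv ≫ (V ◁ eta) ≫ psi = (λ_ V).inv ≫ (eta ▷ V) ∧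
  (λ_ V).inv ≫ (etaV ▷ V) ≫ sig = (λ_ V).inv ≫ (eta ▷ V) ∧
  (ρ_ V).inv ≫ (V ◁ etaV) ≫ sig = (λ_ V).inv ≫ (eta ▷ V)


section Aux

theorem wxa {W X Y Z : C} (f : W ⟶ X) (g : Y ⟶ Z) {O : C} (h : X ⊗ Z ⟶ O) :
    (W ◁ g) ≫ (f ▷ Z) ≫ h = (f ▷ Y) ≫ (X ◁ g) ≫ h := by
  rw [← Category.assoc, whisker_exchange, Category.assoc]

/-- `g0`: the map `v ↦ ψ(v ⊗ η)`. -/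
def g0 (A V : C) (eta : 𝟙_ C ⟶ A) (psi : V ⊗ A ⟶ A ⊗ V) : V ⟶ A ⊗ V :=
  (ρ_ V).inv ≫ (V ◁ eta) ≫ psi

/-- `ω = (μ_A ⊗ V)(A ⊗ σ)(ψ ⊗ V) : V ⊗ (A ⊗ V) ⟶ A ⊗ V`. -/
def omg (A V : C) (mu : A ⊗ A ⟶ A) (psi : V ⊗ A ⟶ A ⊗ V) (sig : V ⊗ V ⟶ A ⊗ V) :
    V ⊗ (A ⊗ V) ⟶ A ⊗ V :=
  (α_ V A V).inv ≫ (psi ▷ V) ≫ phi A mu sig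

theorem phi_eq (A : C) {X Z Y : C} (mu : A ⊗ A ⟶ A) (f : X ⊗ Z ⟶ A ⊗ Y) :
    phi A mu f = (α_ A X Z).hom ≫ tmap A mu f := by simp [phi, tmap]

theorem nabla_eq (A V : C) (eta : 𝟙_ C ⟶ A) (mu : A ⊗ A ⟶ A) (psi : V ⊗ A ⟶ A ⊗ V) :
    nabla A V eta mu psi = tmap A mu (g0 A V eta psi) := by
  unfold nabla phi tmap g0; monoidal

theorem tmap_leftLin (A : C) {X Y : C} (mu : A ⊗ A ⟶ A)
    (hassoc : (mu ▷ A) ≫ mu = (α_ A A A).hom ≫ (A ◁ mu) ≫ mu) (g : X ⟶ A ⊗ Y) :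
    (mu ▷ X) ≫ tmap A mu g =
      (α_ A A X).hom ≫ (A ◁ tmap A mu g) ≫ (α_ A A Y).inv ≫ (mu ▷ Y) := by
  unfold tmap
  calc (mu ▷ X) ≫ (A ◁ g) ≫ (α_ A A Y).inv ≫ (mu ▷ Y)
      = ((A ⊗ A) ◁ g) ≫ (α_ (A ⊗ A) A Y).inv ≫ (((mu ▷ A) ≫ mu) ▷ Y) := by
        rw [← Category.assoc, ← whisker_exchange]; monoidal
    _ = ((A ⊗ A) ◁ g) ≫ (α_ (A ⊗ A) A Y).inv ≫
          (((α_ A A A).hom ≫ (A ◁ mu) ≫ mu) ▷ Y) := by rw [hassoc]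
    _ = (α_ A A X).hom ≫ (A ◁ ((A ◁ g) ≫ (α_ A A Y).inv ≫ (mu ▷ Y))) ≫
          (α_ A A Y).inv ≫ (mu ▷ Y) := by monoidal

theorem tmap_comp (A : C) {X Y Z : C} (mu : A ⊗ A ⟶ A)
    (hassoc : (mu ▷ A) ≫ mu = (α_ A A A).hom ≫ (A ◁ mu) ≫ mu)
    (g : X ⟶ A ⊗ Y) (h : Y ⟶ A ⊗ Z) :
    tmap A mu g ≫ tmap A mu h = tmap A mu (g ≫ tmap A mu h) := by
  unfold tmap
  calc ((A ◁ g) ≫ (α_ A A Y).inv ≫ (mu ▷ Y)) ≫ (A ◁ h) ≫ (α_ A A Z).inv ≫ (mu ▷ Z)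
      = (A ◁ g) ≫ (α_ A A Y).inv ≫ ((A ⊗ A) ◁ h) ≫ (α_ (A ⊗ A) A Z).inv ≫
          (((mu ▷ A) ≫ mu) ▷ Z) := by
        rw [Category.assoc, Category.assoc, ← Category.assoc (mu ▷ Y), ← whisker_exchange]
        monoidal
    _ = (A ◁ g) ≫ (α_ A A Y).inv ≫ ((A ⊗ A) ◁ h) ≫ (α_ (A ⊗ A) A Z).inv ≫
          (((α_ A A A).hom ≫ (A ◁ mu) ≫ mu) ▷ Z) := by rw [hassoc]
    _ = (A ◁ (g ≫ (A ◁ h) ≫ (α_ A A Z).inv ≫ (mu ▷ Z))) ≫ (α_ A A Z).inv ≫ (mu ▷ Z) := by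
        monoidal

theorem prod_eq (A V : C) (mu : A ⊗ A ⟶ A)
    (hassoc : (mu ▷ A) ≫ mu = (α_ A A A).hom ≫ (A ◁ mu) ≫ mu)
    (psi : V ⊗ A ⟶ A ⊗ V) (sig : V ⊗ V ⟶ A ⊗ V) :
    prodAV A V mu psi sig = (α_ A V (A ⊗ V)).hom ≫ tmap A mu (omg A V mu psi sig) := by
  calc prodAV A V mu psi sig
      = (α_ A V (A ⊗ V)).hom ≫
          (A ◁ ((α_ V A V).inv ≫ (psi ▷ V) ≫ (α_ A V V).hom ≫ (A ◁ sig))) ≫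
          (α_ A A (A ⊗ V)).inv ≫ (α_ (A ⊗ A) A V).inv ≫ (((mu ▷ A) ≫ mu) ▷ V) := by
        unfold prodAV; rw [tensorHom_def']; monoidal
    _ = (α_ A V (A ⊗ V)).hom ≫
          (A ◁ ((α_ V A V).inv ≫ (psi ▷ V) ≫ (α_ A V V).hom ≫ (A ◁ sig))) ≫
          (α_ A A (A ⊗ V)).inv ≫ (α_ (A ⊗ A) A V).inv ≫
          (((α_ A A A).hom ≫ (A ◁ mu) ≫ mu) ▷ V) := by rw [hassoc]
    _ = (α_ A V (A ⊗ V)).hom ≫ tmap A mu (omg A V mu psi sig) := by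
        unfold omg phi tmap; monoidal

theorem omg_nabla (A V : C) (eta : 𝟙_ C ⟶ A) (mu : A ⊗ A ⟶ A)
    (hassoc : (mu ▷ A) ≫ mu = (α_ A A A).hom ≫ (A ◁ mu) ≫ mu)
    (psi : V ⊗ A ⟶ A ⊗ V) (sig : V ⊗ V ⟶ A ⊗ V)
    (hsig : sig ≫ nabla A V eta mu psi = sig) :
    omg A V mu psi sig ≫ nabla A V eta mu psi = omg A V mu psi sig := by
  have h : phi A mu sig ≫ nabla A V eta mu psi = phi A mu sig := by
    rw [phi_eq, nabla_eq, Category.assoc, tmap_comp A mu hassoc, ← nabla_eq, hsig]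
  unfold omg
  rw [Category.assoc, Category.assoc, h]

/-- `∇ ∘ μ_{A⊗V} = μ_{A⊗V}`. -/
theorem prod_nabla (A V : C) (eta : 𝟙_ C ⟶ A) (mu : A ⊗ A ⟶ A)
    (hassoc : (mu ▷ A) ≫ mu = (α_ A A A).hom ≫ (A ◁ mu) ≫ mu)
    (psi : V ⊗ A ⟶ A ⊗ V) (sig : V ⊗ V ⟶ A ⊗ V)
    (hsig : sig ≫ nabla A V eta mu psi = sig) :
    prodAV A V mu psi sig ≫ nabla A V eta mu psi = prodAV A V mu psi sig := by
  rw [prod_eq A V mu hassoc, nabla_eq, Category.assoc, tmap_comp A mu hassoc,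
    ← nabla_eq, omg_nabla A V eta mu hassoc psi sig hsig]

/-- `∇ ∘ ν = ν`. -/
theorem nu_nabla (A V : C) (eta : 𝟙_ C ⟶ A) (mu : A ⊗ A ⟶ A)
    (hunit : (eta ▷ A) ≫ mu = (λ_ A).hom)
    (psi : V ⊗ A ⟶ A ⊗ V) (nu : 𝟙_ C ⟶ A ⊗ V)
    (hpre3 : Pre3 A V mu psi nu) :
    nu ≫ nabla A V eta mu psi = nu := by
  calc nu ≫ nabla A V eta mu psi
      = (λ_ (𝟙_ C)).inv ≫ (𝟙_ C ◁ eta) ≫ (nu ▷ A) ≫ phi A mu psi := by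
        unfold nabla
        rw [wxa nu eta]
        monoidal
    _ = eta ≫ (λ_ A).inv ≫ (nu ▷ A) ≫ phi A mu psi := by monoidal
    _ = eta ≫ beta A V mu nu := by rw [hpre3]
    _ = (ρ_ (𝟙_ C)).inv ≫ (𝟙_ C ◁ nu) ≫ (eta ▷ (A ⊗ V)) ≫ (α_ A A V).inv ≫
          (mu ▷ V) := by unfold beta; rw [wxa eta nu]; monoidal
    _ = nu ≫ (λ_ (A ⊗ V)).inv ≫ (α_ (𝟙_ C) A V).inv ≫ (((eta ▷ A) ≫ mu) ▷ V) := by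
        monoidal
    _ = nu := by rw [hunit]; monoidal

theorem omg_measuring (A V : C) (mu : A ⊗ A ⟶ A)
    (hassoc : (mu ▷ A) ≫ mu = (α_ A A A).hom ≫ (A ◁ mu) ≫ mu)
    (psi : V ⊗ A ⟶ A ⊗ V) (sig : V ⊗ V ⟶ A ⊗ V)
    (hmeas : Measuring A V mu psi) :
    (psi ▷ (A ⊗ V)) ≫ (α_ A V (A ⊗ V)).hom ≫ tmap A mu (omg A V mu psi sig) =
      (α_ V A (A ⊗ V)).hom ≫ (V ◁ (α_ A A V).inv) ≫ (V ◁ (mu ▷ V)) ≫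
        omg A V mu psi sig := by
  calc (psi ▷ (A ⊗ V)) ≫ (α_ A V (A ⊗ V)).hom ≫ tmap A mu (omg A V mu psi sig)
      = (psi ▷ (A ⊗ V)) ≫ (α_ A V (A ⊗ V)).hom ≫
          (A ◁ ((α_ V A V).inv ≫ (psi ▷ V) ≫ (α_ A V V).hom ≫ (A ◁ sig))) ≫
          (α_ A A (A ⊗ V)).inv ≫ (α_ (A ⊗ A) A V).inv ≫
          (((α_ A A A).hom ≫ (A ◁ mu) ≫ mu) ▷ V) := by
        unfold tmap omg phi; monoidal
    _ = (psi ▷ (A ⊗ V)) ≫ (α_ A V (A ⊗ V)).hom ≫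
          (A ◁ ((α_ V A V).inv ≫ (psi ▷ V) ≫ (α_ A V V).hom ≫ (A ◁ sig))) ≫
          (α_ A A (A ⊗ V)).inv ≫ (α_ (A ⊗ A) A V).inv ≫
          (((mu ▷ A) ≫ mu) ▷ V) := by rw [hassoc]
    _ = (psi ▷ (A ⊗ V)) ≫ (α_ A V (A ⊗ V)).hom ≫
          (A ◁ ((α_ V A V).inv ≫ (psi ▷ V) ≫ (α_ A V V).hom)) ≫
          (α_ A A (V ⊗ V)).inv ≫ ((A ⊗ A) ◁ sig) ≫ (mu ▷ (A ⊗ V)) ≫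
          (α_ A A V).inv ≫ (mu ▷ V) := by monoidal
    _ = (psi ▷ (A ⊗ V)) ≫ (α_ A V (A ⊗ V)).hom ≫
          (A ◁ ((α_ V A V).inv ≫ (psi ▷ V) ≫ (α_ A V V).hom)) ≫
          (α_ A A (V ⊗ V)).inv ≫ (mu ▷ (V ⊗ V)) ≫ (A ◁ sig) ≫
          (α_ A A V).inv ≫ (mu ▷ V) := by rw [wxa mu sig]
    _ = (α_ (V ⊗ A) A V).inv ≫ (((psi ▷ A) ≫ phi A mu psi) ▷ V) ≫
          phi A mu sig := by unfold phi; monoidal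
    _ = (α_ (V ⊗ A) A V).inv ≫ (((α_ V A A).hom ≫ (V ◁ mu) ≫ psi) ▷ V) ≫
          phi A mu sig := by rw [hmeas]
    _ = (α_ V A (A ⊗ V)).hom ≫ (V ◁ (α_ A A V).inv) ≫ (V ◁ (mu ▷ V)) ≫
        omg A V mu psi sig := by unfold omg; monoidal

/-- `ω ∘ (V ⊗ (η_A ⊗ V)-insertion) = ω` (Sweedler: `ω(v, 1·b ⊗ w) = ω(v, b ⊗ w)`). -/
theorem g0_omg (A V : C) (eta : 𝟙_ C ⟶ A) (mu : A ⊗ A ⟶ A)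
    (hunit : (eta ▷ A) ≫ mu = (λ_ A).hom)
    (hassoc : (mu ▷ A) ≫ mu = (α_ A A A).hom ≫ (A ◁ mu) ≫ mu)
    (psi : V ⊗ A ⟶ A ⊗ V) (sig : V ⊗ V ⟶ A ⊗ V)
    (hmeas : Measuring A V mu psi) :
    (g0 A V eta psi ▷ (A ⊗ V)) ≫ (α_ A V (A ⊗ V)).hom ≫
      tmap A mu (omg A V mu psi sig) = omg A V mu psi sig := by
  calc (g0 A V eta psi ▷ (A ⊗ V)) ≫ (α_ A V (A ⊗ V)).hom ≫
        tmap A mu (omg A V mu psi sig)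
      = (((ρ_ V).inv ≫ (V ◁ eta)) ▷ (A ⊗ V)) ≫ ((psi ▷ (A ⊗ V)) ≫
          (α_ A V (A ⊗ V)).hom ≫ tmap A mu (omg A V mu psi sig)) := by
        unfold g0; simp only [comp_whiskerRight, Category.assoc]
    _ = (((ρ_ V).inv ≫ (V ◁ eta)) ▷ (A ⊗ V)) ≫ (α_ V A (A ⊗ V)).hom ≫
          (V ◁ (α_ A A V).inv) ≫ (V ◁ (mu ▷ V)) ≫ omg A V mu psi sig := by
        rw [omg_measuring A V mu hassoc psi sig hmeas]
    _ = (V ◁ ((λ_ (A ⊗ V)).inv ≫ (α_ (𝟙_ C) A V).inv ≫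
          (((eta ▷ A) ≫ mu) ▷ V))) ≫ omg A V mu psi sig := by monoidal
    _ = omg A V mu psi sig := by rw [hunit]; monoidal

/-- `ω ∘ (V ⊗ g0) = σ` (needs the twisted condition and `∇σ = σ`). -/
theorem g0_omg' (A V : C) (eta : 𝟙_ C ⟶ A) (mu : A ⊗ A ⟶ A)
    (psi : V ⊗ A ⟶ A ⊗ V) (sig : V ⊗ V ⟶ A ⊗ V)
    (htw : Twisted A V mu psi sig)
    (hsig : sig ≫ nabla A V eta mu psi = sig) :
    (V ◁ g0 A V eta psi) ≫ omg A V mu psi sig = sig := by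
  calc (V ◁ g0 A V eta psi) ≫ omg A V mu psi sig
      = (ρ_ (V ⊗ V)).inv ≫ ((V ⊗ V) ◁ eta) ≫ ((α_ V V A).hom ≫ (V ◁ psi) ≫
          (α_ V A V).inv ≫ (psi ▷ V) ≫ phi A mu sig) := by
        unfold g0 omg; monoidal
    _ = (ρ_ (V ⊗ V)).inv ≫ ((V ⊗ V) ◁ eta) ≫ (sig ▷ A) ≫ phi A mu psi := by
        rw [← htw]
    _ = sig ≫ (ρ_ (A ⊗ V)).inv ≫ ((A ⊗ V) ◁ eta) ≫ phi A mu psi := by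
        rw [wxa sig eta]; monoidal
    _ = sig ≫ nabla A V eta mu psi := by unfold nabla; rfl
    _ = sig := hsig

/-- `ω ∘ (V ⊗ ∇) = ω`. -/
theorem nabla_omg (A V : C) (eta : 𝟙_ C ⟶ A) (mu : A ⊗ A ⟶ A)
    (hassoc : (mu ▷ A) ≫ mu = (α_ A A A).hom ≫ (A ◁ mu) ≫ mu)
    (psi : V ⊗ A ⟶ A ⊗ V) (sig : V ⊗ V ⟶ A ⊗ V)
    (hmeas : Measuring A V mu psi) (htw : Twisted A V mu psi sig)
    (hsig : sig ≫ nabla A V eta mu psi = sig) :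
    (V ◁ nabla A V eta mu psi) ≫ omg A V mu psi sig = omg A V mu psi sig := by
  calc (V ◁ nabla A V eta mu psi) ≫ omg A V mu psi sig
      = (V ◁ (A ◁ g0 A V eta psi)) ≫ (α_ V A (A ⊗ V)).inv ≫
          ((psi ▷ (A ⊗ V)) ≫ (α_ A V (A ⊗ V)).hom ≫
            tmap A mu (omg A V mu psi sig)) := by
        rw [nabla_eq, omg_measuring A V mu hassoc psi sig hmeas]
        unfold tmap
        simp only [MonoidalCategory.whiskerLeft_comp, Category.assoc,
          Iso.inv_hom_id_assoc]
    _ = (α_ V A V).inv ≫ ((V ⊗ A) ◁ g0 A V eta psi) ≫ (psi ▷ (A ⊗ V)) ≫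
          (α_ A V (A ⊗ V)).hom ≫ tmap A mu (omg A V mu psi sig) := by monoidal
    _ = (α_ V A V).inv ≫ (psi ▷ V) ≫ ((A ⊗ V) ◁ g0 A V eta psi) ≫
          (α_ A V (A ⊗ V)).hom ≫ tmap A mu (omg A V mu psi sig) := by
        rw [wxa psi (g0 A V eta psi)]
    _ = (α_ V A V).inv ≫ (psi ▷ V) ≫ (α_ A V V).hom ≫
          (A ◁ ((V ◁ g0 A V eta psi) ≫ omg A V mu psi sig)) ≫ (α_ A A V).inv ≫
          (mu ▷ V) := by unfold tmap; monoidal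
    _ = omg A V mu psi sig := by
        rw [g0_omg' A V eta mu psi sig htw hsig]; unfold omg phi; monoidal

/-- `μ_{A⊗V} ∘ (∇ ⊗ id) = μ_{A⊗V}`. -/
theorem nabla_left_prod (A V : C) (eta : 𝟙_ C ⟶ A) (mu : A ⊗ A ⟶ A)
    (hunit : (eta ▷ A) ≫ mu = (λ_ A).hom)
    (hassoc : (mu ▷ A) ≫ mu = (α_ A A A).hom ≫ (A ◁ mu) ≫ mu)
    (psi : V ⊗ A ⟶ A ⊗ V) (sig : V ⊗ V ⟶ A ⊗ V)
    (hmeas : Measuring A V mu psi) :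
    (nabla A V eta mu psi ▷ (A ⊗ V)) ≫ prodAV A V mu psi sig =
      prodAV A V mu psi sig := by
  rw [prod_eq A V mu hassoc, nabla_eq]
  calc (tmap A mu (g0 A V eta psi) ▷ (A ⊗ V)) ≫ (α_ A V (A ⊗ V)).hom ≫
        tmap A mu (omg A V mu psi sig)
      = ((A ◁ g0 A V eta psi) ▷ (A ⊗ V)) ≫ ((α_ A A V).inv ▷ (A ⊗ V)) ≫
          (α_ (A ⊗ A) V (A ⊗ V)).hom ≫ (mu ▷ (V ⊗ (A ⊗ V))) ≫
          tmap A mu (omg A V mu psi sig) := by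
        unfold tmap; simp only [comp_whiskerRight, Category.assoc]; monoidal
    _ = ((A ◁ g0 A V eta psi) ▷ (A ⊗ V)) ≫ ((α_ A A V).inv ▷ (A ⊗ V)) ≫
          (α_ (A ⊗ A) V (A ⊗ V)).hom ≫ (α_ A A (V ⊗ (A ⊗ V))).hom ≫
          (A ◁ tmap A mu (omg A V mu psi sig)) ≫ (α_ A A V).inv ≫ (mu ▷ V) := by
        rw [tmap_leftLin A mu hassoc]
    _ = (α_ A V (A ⊗ V)).hom ≫
          (A ◁ ((g0 A V eta psi ▷ (A ⊗ V)) ≫ (α_ A V (A ⊗ V)).hom ≫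
            tmap A mu (omg A V mu psi sig))) ≫ (α_ A A V).inv ≫ (mu ▷ V) := by
        monoidal
    _ = (α_ A V (A ⊗ V)).hom ≫ (A ◁ omg A V mu psi sig) ≫ (α_ A A V).inv ≫
          (mu ▷ V) := by rw [g0_omg A V eta mu hunit hassoc psi sig hmeas]
    _ = (α_ A V (A ⊗ V)).hom ≫ tmap A mu (omg A V mu psi sig) := by
        unfold tmap; rfl

/-- `μ_{A⊗V} ∘ (id ⊗ ∇) = μ_{A⊗V}`. -/
theorem nabla_right_prod (A V : C) (eta : 𝟙_ C ⟶ A) (mu : A ⊗ A ⟶ A)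
    (hassoc : (mu ▷ A) ≫ mu = (α_ A A A).hom ≫ (A ◁ mu) ≫ mu)
    (psi : V ⊗ A ⟶ A ⊗ V) (sig : V ⊗ V ⟶ A ⊗ V)
    (hmeas : Measuring A V mu psi) (htw : Twisted A V mu psi sig)
    (hsig : sig ≫ nabla A V eta mu psi = sig) :
    ((A ⊗ V) ◁ nabla A V eta mu psi) ≫ prodAV A V mu psi sig =
      prodAV A V mu psi sig := by
  rw [prod_eq A V mu hassoc]
  calc ((A ⊗ V) ◁ nabla A V eta mu psi) ≫ (α_ A V (A ⊗ V)).hom ≫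
        tmap A mu (omg A V mu psi sig)
      = (α_ A V (A ⊗ V)).hom ≫
          (A ◁ ((V ◁ nabla A V eta mu psi) ≫ omg A V mu psi sig)) ≫
          (α_ A A V).inv ≫ (mu ▷ V) := by unfold tmap; monoidal
    _ = (α_ A V (A ⊗ V)).hom ≫ (A ◁ omg A V mu psi sig) ≫ (α_ A A V).inv ≫
          (mu ▷ V) := by rw [nabla_omg A V eta mu hassoc psi sig hmeas htw hsig]
    _ = (α_ A V (A ⊗ V)).hom ≫ tmap A mu (omg A V mu psi sig) := by
        unfold tmap; rfl

end Aux

/-- if `T` is multiplicative and `S∘T = ∇_{A⊗V}`, `T∘S = ∇_{A⊗W}`,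
then `S` is multiplicative; and if moreover `T∘ν_V = ν_W` then `S∘ν_W = ν_V`. -/
theorem S_multiplicative (A V W : C) (eta : 𝟙_ C ⟶ A) (mu : A ⊗ A ⟶ A)
    (hA : IsMon A eta mu)
    (psiV : V ⊗ A ⟶ A ⊗ V) (sigV : V ⊗ V ⟶ A ⊗ V) (nuV : 𝟙_ C ⟶ A ⊗ V)
    (psiW : W ⊗ A ⟶ A ⊗ W) (sigW : W ⊗ W ⟶ A ⊗ W) (nuW : 𝟙_ C ⟶ A ⊗ W)
    (hV : WCPpre A V eta mu psiV sigV nuV) (hW : WCPpre A W eta mu psiW sigW nuW)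
    (T : A ⊗ V ⟶ A ⊗ W) (S : A ⊗ W ⟶ A ⊗ V)
    (hm : prodAV A V mu psiV sigV ≫ T = (T ⊗ₘ T) ≫ prodAV A W mu psiW sigW)
    (hTS : T ≫ S = nabla A V eta mu psiV) (hST : S ≫ T = nabla A W eta mu psiW) :
    prodAV A W mu psiW sigW ≫ S = (S ⊗ₘ S) ≫ prodAV A V mu psiV sigV ∧
    (nuV ≫ T = nuW → nuW ≫ S = nuV) := by
  obtain ⟨hu1, hu2, hassoc⟩ := hA
  obtain ⟨⟨hmV, htwV, hcoV, hsV⟩, hp1V, hp2V, hp3V⟩ := hV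
  obtain ⟨⟨hmW, htwW, hcoW, hsW⟩, hp1W, hp2W, hp3W⟩ := hW
  have key : prodAV A W mu psiW sigW = (S ⊗ₘ S) ≫ prodAV A V mu psiV sigV ≫ T := by
    calc prodAV A W mu psiW sigW
        = (nabla A W eta mu psiW ⊗ₘ nabla A W eta mu psiW) ≫
            prodAV A W mu psiW sigW := by
          rw [tensorHom_def', Category.assoc]
          rw [nabla_left_prod A W eta mu hu1 hassoc psiW sigW hmW]
          rw [nabla_right_prod A W eta mu hassoc psiW sigW hmW htwW hsW]
      _ = ((S ≫ T) ⊗ₘ (S ≫ T)) ≫ prodAV A W mu psiW sigW := by rw [hST]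
      _ = (S ⊗ₘ S) ≫ (T ⊗ₘ T) ≫ prodAV A W mu psiW sigW := by
          rw [tensorHom_comp_tensorHom_assoc]
      _ = (S ⊗ₘ S) ≫ prodAV A V mu psiV sigV ≫ T := by rw [← hm]
  constructor
  · calc prodAV A W mu psiW sigW ≫ S
        = (S ⊗ₘ S) ≫ prodAV A V mu psiV sigV ≫ (T ≫ S) := by
          rw [key]; simp only [Category.assoc]
      _ = (S ⊗ₘ S) ≫ prodAV A V mu psiV sigV ≫ nabla A V eta mu psiV := by
          rw [hTS]
      _ = (S ⊗ₘ S) ≫ prodAV A V mu psiV sigV := by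
          rw [prod_nabla A V eta mu hassoc psiV sigV hsV]
  · intro hnu
    calc nuW ≫ S = nuV ≫ T ≫ S := by rw [← hnu, Category.assoc]
      _ = nuV ≫ nabla A V eta mu psiV := by rw [hTS]
      _ = nuV := nu_nabla A V eta mu hu1 psiV nuV hp3V


end WeakCrossed
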